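/- The minimum over probability measures μ on Ω̄ of F(μ) = (1/Λ_p)·esssup_{x∈Ω} ρ(x)/(σ(x) f(x)^p), where f is the density of the absolutely continuous part of μ, equals (1/Λ_p)·(∫_Ω (ρ(x)/σ(x))^{1/p} dx)^p, and it is uniquely achieved by the absolutely continuous measure with density f(x) = (ρ(x)/σ(x))^{1/p} / ∫_Ω (ρ(y)/σ(y))^{1/p} dy. -/

import Mathlib

open MeasureTheory Set Filter Topology
open scoped ENNReal NNReal

noncomputable section

abbrev E2 := EuclideanSpace ℝ (Fin 2)

/-- The limit functional `F(μ) = (1/Λ_p)·esssup_{x∈Ω} ρ(x)/(σ(x) f(x)^p)`, where `f`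
is the density of the absolutely continuous part of `μ` (with `a/0 = ∞`, so that
`F(μ) = ∞` if `f` vanishes on a set of positive measure). -/
def limitF (Λp p : ℝ) (Ω : Set E2) (σ ρ : E2 → ℝ) (μ : Measure E2) : ℝ≥0∞ :=
  (ENNReal.ofReal Λp)⁻¹ *
    essSup (fun x => ENNReal.ofReal (ρ x) /
      (ENNReal.ofReal (σ x) * (μ.rnDeriv volume x) ^ p)) (volume.restrict Ω)

/-- The minimum of `F` over probability measures on `closure Ω` equals
`(1/Λ_p)·(∫_Ω (ρ/σ)^{1/p})^p`, uniquely attained by the absolutely continuous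
measure with density `(ρ/σ)^{1/p} / ∫_Ω (ρ/σ)^{1/p}`. -/
theorem limitF_min (p Λp : ℝ) (hp : 1 ≤ p) (hΛ : 0 < Λp)
    (Ω : Set E2) (hΩo : IsOpen Ω) (hΩb : Bornology.IsBounded Ω) (hΩne : Ω.Nonempty)
    (σ ρ : E2 → ℝ)
    (hσc : ContinuousOn σ (closure Ω)) (hρc : ContinuousOn ρ (closure Ω))
    (hσ : ∀ x ∈ closure Ω, 0 < σ x) (hρ : ∀ x ∈ closure Ω, 0 < ρ x)
    (μinf : Measure E2)
    (hμinf : μinf = (volume.restrict Ω).withDensity (fun x =>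
      ENNReal.ofReal ((ρ x / σ x) ^ (1 / p) / ∫ y in Ω, (ρ y / σ y) ^ (1 / p)))) :
    (∀ μ : Measure E2, IsProbabilityMeasure μ → μ (closure Ω) = 1 →
      limitF Λp p Ω σ ρ μinf ≤ limitF Λp p Ω σ ρ μ) ∧
    limitF Λp p Ω σ ρ μinf =
      (ENNReal.ofReal Λp)⁻¹ *
        ENNReal.ofReal ((∫ x in Ω, (ρ x / σ x) ^ (1 / p)) ^ p) ∧
    (∀ μ : Measure E2, IsProbabilityMeasure μ → μ (closure Ω) = 1 →
      limitF Λp p Ω σ ρ μ = limitF Λp p Ω σ ρ μinf → μ = μinf) := by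
  have hp0 : (0:ℝ) < p := lt_of_lt_of_le one_pos hp
  have hpne : p ≠ 0 := hp0.ne'
  have hΩm : MeasurableSet Ω := hΩo.measurableSet
  set g : E2 → ℝ := fun x => (ρ x / σ x) ^ (1 / p) with hgdef
  have hKc : IsCompact (closure Ω) := hΩb.isCompact_closure
  have hgc : ContinuousOn g (closure Ω) := by
    refine ContinuousOn.rpow_const (hρc.div hσc fun x hx => (hσ x hx).ne') ?_
    intro x hx; right; positivity
  have hgint : IntegrableOn g Ω := (hgc.integrableOn_compact hKc).mono_set subset_closure
  set I : ℝ := ∫ x in Ω, g x with hIdef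
  have hgpos : ∀ x ∈ Ω, 0 < g x := fun x hx =>
    Real.rpow_pos_of_pos (div_pos (hρ x (subset_closure hx)) (hσ x (subset_closure hx))) _
  have hgnn : 0 ≤ᵐ[volume.restrict Ω] g := by
    filter_upwards [ae_restrict_mem hΩm] with x hx using (hgpos x hx).le
  have hΩpos : 0 < volume Ω := hΩo.measure_pos volume hΩne
  have hI : 0 < I := by
    rw [hIdef]
    refine (setIntegral_pos_iff_support_of_nonneg_ae hgnn hgint).2 ?_
    refine lt_of_lt_of_le hΩpos (measure_mono ?_)
    exact fun x hx => ⟨(hgpos x hx).ne', hx⟩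
  have hIne : I ≠ 0 := hI.ne'
  -- density of μinf
  set d : E2 → ℝ≥0∞ := Ω.indicator (fun x => ENNReal.ofReal (g x / I)) with hddef
  have hdae : AEMeasurable d volume := by
    rw [hddef]
    refine (aemeasurable_indicator_iff hΩm).2 ?_
    exact ENNReal.measurable_ofReal.comp_aemeasurable
      (((hgc.mono subset_closure).aemeasurable hΩm).div_const I)
  have hμinf' : μinf = (volume.restrict Ω).withDensity (fun x => ENNReal.ofReal (g x / I)) :=
    hμinf
  have hμinf_eq : μinf = volume.withDensity d := by
    rw [hμinf', hddef, withDensity_indicator hΩm]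
  have hrn : μinf.rnDeriv volume =ᵐ[volume] d := by
    rw [hμinf_eq]; exact Measure.rnDeriv_withDensity₀ volume hdae
  have hres_ne : volume.restrict Ω ≠ 0 := by
    simp [Measure.restrict_eq_zero, hΩpos.ne']
  have hconst : (fun x => ENNReal.ofReal (ρ x) /
      (ENNReal.ofReal (σ x) * (μinf.rnDeriv volume x) ^ p))
      =ᵐ[volume.restrict Ω] (fun _ => ENNReal.ofReal (I ^ p)) := by
    filter_upwards [ae_restrict_mem hΩm, ae_restrict_of_ae hrn] with x hx hdx
    have hσx := hσ x (subset_closure hx)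
    have hρx := hρ x (subset_closure hx)
    have hgx := hgpos x hx
    have hIp : (0:ℝ) < I ^ p := Real.rpow_pos_of_pos hI p
    rw [hdx, hddef, Set.indicator_of_mem hx, ENNReal.ofReal_rpow_of_pos (by positivity)]
    have h1 : (g x / I) ^ p = (ρ x / σ x) / I ^ p := by
      rw [Real.div_rpow hgx.le hI.le]
      simp only [hgdef]
      rw [← Real.rpow_mul (by positivity), one_div_mul_cancel hpne, Real.rpow_one]
    rw [h1, ← ENNReal.ofReal_mul hσx.le]
    have h2 : σ x * (ρ x / σ x / I ^ p) = ρ x / I ^ p := by field_simp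
    rw [h2, ← ENNReal.ofReal_div_of_pos (by positivity)]
    congr 1
    field_simp
  have hessμinf : essSup (fun x => ENNReal.ofReal (ρ x) /
      (ENNReal.ofReal (σ x) * (μinf.rnDeriv volume x) ^ p)) (volume.restrict Ω)
      = ENNReal.ofReal (I ^ p) := by
    rw [essSup_congr_ae hconst, essSup_const _ hres_ne]
  -- key lemma for arbitrary probability measures
  have key : ∀ μ : Measure E2, IsProbabilityMeasure μ →
      ∀ M : ℝ≥0∞, M = essSup (fun x => ENNReal.ofReal (ρ x) /
        (ENNReal.ofReal (σ x) * (μ.rnDeriv volume x) ^ p)) (volume.restrict Ω) →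
      M ≠ ∞ →
      (∀ᵐ x ∂volume.restrict Ω,
        ENNReal.ofReal (g x) ≤ M ^ (1/p) * μ.rnDeriv volume x)
      ∧ ENNReal.ofReal I ≤ M ^ (1/p) := by
    intro μ hprob M hM hMne
    have hfae : ∀ᵐ x ∂volume.restrict Ω,
        ENNReal.ofReal (ρ x) / (ENNReal.ofReal (σ x) * (μ.rnDeriv volume x) ^ p) ≤ M := by
      rw [hM]; exact ae_le_essSup
    have hflt : ∀ᵐ x ∂volume.restrict Ω, μ.rnDeriv volume x < ∞ :=
      ae_restrict_of_ae (Measure.rnDeriv_lt_top μ volume)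
    have hpt : ∀ᵐ x ∂volume.restrict Ω,
        ENNReal.ofReal (g x) ≤ M ^ (1/p) * μ.rnDeriv volume x := by
      filter_upwards [ae_restrict_mem hΩm, hfae, hflt] with x hx hle hlt
      have hσx := hσ x (subset_closure hx)
      have hρx := hρ x (subset_closure hx)
      have hb_ne_top : ENNReal.ofReal (σ x) * (μ.rnDeriv volume x) ^ p ≠ ∞ :=
        ENNReal.mul_ne_top ENNReal.ofReal_ne_top
          (ENNReal.rpow_lt_top_of_nonneg hp0.le hlt.ne).ne
      have hb_ne_zero : ENNReal.ofReal (σ x) * (μ.rnDeriv volume x) ^ p ≠ 0 := by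
        intro h0
        rw [h0, ENNReal.div_zero (ENNReal.ofReal_pos.2 hρx).ne'] at hle
        exact hMne (top_le_iff.1 hle)
      have h1 : ENNReal.ofReal (ρ x) ≤ M * (ENNReal.ofReal (σ x) * (μ.rnDeriv volume x) ^ p) :=
        (ENNReal.div_le_iff_le_mul (Or.inl hb_ne_zero) (Or.inl hb_ne_top)).1 hle
      have h2 := ENNReal.rpow_le_rpow h1 (by positivity : (0:ℝ) ≤ 1/p)
      rw [ENNReal.mul_rpow_of_nonneg _ _ (by positivity),
        ENNReal.mul_rpow_of_nonneg _ _ (by positivity),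
        ← ENNReal.rpow_mul, mul_one_div_cancel hpne, ENNReal.rpow_one] at h2
      have h3 : ENNReal.ofReal (g x)
          = ENNReal.ofReal (ρ x) ^ (1/p) / ENNReal.ofReal (σ x) ^ (1/p) := by
        simp only [hgdef]
        rw [← ENNReal.ofReal_rpow_of_pos (by positivity), ENNReal.ofReal_div_of_pos hσx,
          ENNReal.div_rpow_of_nonneg _ _ (by positivity)]
      rw [h3, ENNReal.div_le_iff_le_mul
        (Or.inl (ENNReal.rpow_pos (ENNReal.ofReal_pos.2 hσx) ENNReal.ofReal_ne_top).ne')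
        (Or.inl (ENNReal.rpow_lt_top_of_nonneg (by positivity) ENNReal.ofReal_ne_top).ne)]
      calc ENNReal.ofReal (ρ x) ^ (1/p)
          ≤ M ^ (1/p) * (ENNReal.ofReal (σ x) ^ (1/p) * μ.rnDeriv volume x) := h2
        _ = M ^ (1/p) * μ.rnDeriv volume x * ENNReal.ofReal (σ x) ^ (1/p) := by ring
    refine ⟨hpt, ?_⟩
    have hint1 : ENNReal.ofReal I = ∫⁻ x in Ω, ENNReal.ofReal (g x) := by
      rw [hIdef]; exact ofReal_integral_eq_lintegral_ofReal hgint hgnn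
    have hfint : ∫⁻ x in Ω, μ.rnDeriv volume x ≤ 1 := by
      calc ∫⁻ x in Ω, μ.rnDeriv volume x ≤ ∫⁻ x, μ.rnDeriv volume x :=
            setLIntegral_le_lintegral _ _
        _ = volume.withDensity (μ.rnDeriv volume) Set.univ := by
            rw [withDensity_apply _ MeasurableSet.univ, Measure.restrict_univ]
        _ ≤ μ Set.univ := Measure.le_iff'.1 (Measure.withDensity_rnDeriv_le μ volume) _
        _ = 1 := measure_univ
    calc ENNReal.ofReal I = ∫⁻ x in Ω, ENNReal.ofReal (g x) := hint1
      _ ≤ ∫⁻ x in Ω, M ^ (1/p) * μ.rnDeriv volume x := lintegral_mono_ae hpt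
      _ = M ^ (1/p) * ∫⁻ x in Ω, μ.rnDeriv volume x :=
          lintegral_const_mul' _ _ (ENNReal.rpow_ne_top_of_nonneg (by positivity) hMne)
      _ ≤ M ^ (1/p) * 1 := mul_le_mul_right hfint _
      _ = M ^ (1/p) := mul_one _
  have hΛinv_ne_zero : (ENNReal.ofReal Λp)⁻¹ ≠ 0 :=
    ENNReal.inv_ne_zero.2 ENNReal.ofReal_ne_top
  refine ⟨?_, ?_, ?_⟩
  · -- minimality
    intro μ hprob hcl
    by_cases hM : essSup (fun x => ENNReal.ofReal (ρ x) /
        (ENNReal.ofReal (σ x) * (μ.rnDeriv volume x) ^ p)) (volume.restrict Ω) = ∞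
    · simp only [limitF, hM]
      rw [ENNReal.mul_top hΛinv_ne_zero]
      exact le_top
    · have hkey := key μ hprob _ rfl hM
      have h5 : ENNReal.ofReal (I ^ p) ≤ essSup (fun x => ENNReal.ofReal (ρ x) /
          (ENNReal.ofReal (σ x) * (μ.rnDeriv volume x) ^ p)) (volume.restrict Ω) := by
        have h6 := ENNReal.rpow_le_rpow hkey.2 hp0.le
        rwa [ENNReal.ofReal_rpow_of_pos hI, ← ENNReal.rpow_mul,
          one_div_mul_cancel hpne, ENNReal.rpow_one] at h6
      simp only [limitF, hessμinf]
      exact mul_le_mul_right h5 _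
  · -- value
    simp only [limitF, hessμinf]
  · -- uniqueness
    intro μ hprob hcl heq
    set M := essSup (fun x => ENNReal.ofReal (ρ x) /
      (ENNReal.ofReal (σ x) * (μ.rnDeriv volume x) ^ p)) (volume.restrict Ω) with hMdef
    have hM : M = ENNReal.ofReal (I ^ p) := by
      refine (ENNReal.mul_right_inj hΛinv_ne_zero
        (ENNReal.inv_ne_top.2 (ENNReal.ofReal_pos.2 hΛ).ne')).1 ?_
      have h7 : limitF Λp p Ω σ ρ μ = (ENNReal.ofReal Λp)⁻¹ * M := by
        simp only [limitF, hMdef]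
      have h8 : limitF Λp p Ω σ ρ μinf
          = (ENNReal.ofReal Λp)⁻¹ * ENNReal.ofReal (I ^ p) := by
        simp only [limitF, hessμinf]
      rw [← h7, ← h8, heq]
    have hMne : M ≠ ∞ := by rw [hM]; exact ENNReal.ofReal_ne_top
    have hkey := key μ hprob M hMdef hMne
    have hMp : M ^ (1/p) = ENNReal.ofReal I := by
      rw [hM, ← ENNReal.ofReal_rpow_of_pos hI, ← ENNReal.rpow_mul,
        mul_one_div_cancel hpne, ENNReal.rpow_one]
    have hlow : (fun x => ENNReal.ofReal (g x / I)) ≤ᵐ[volume.restrict Ω]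
        μ.rnDeriv volume := by
      filter_upwards [hkey.1] with x hx
      rw [ENNReal.ofReal_div_of_pos hI,
        ENNReal.div_le_iff_le_mul (Or.inl (ENNReal.ofReal_pos.2 hI).ne')
          (Or.inl ENNReal.ofReal_ne_top)]
      exact hx.trans_eq (by rw [hMp, mul_comm])
    have hlint : ∫⁻ x in Ω, ENNReal.ofReal (g x / I) = 1 := by
      rw [← ofReal_integral_eq_lintegral_ofReal (hgint.div_const I)
        (by filter_upwards [hgnn] with x hx using div_nonneg hx hI.le)]
      rw [integral_div, ← hIdef, div_self hIne, ENNReal.ofReal_one]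
    have hfint : ∫⁻ x in Ω, μ.rnDeriv volume x ≤ 1 := by
      calc ∫⁻ x in Ω, μ.rnDeriv volume x ≤ ∫⁻ x, μ.rnDeriv volume x :=
            setLIntegral_le_lintegral _ _
        _ = volume.withDensity (μ.rnDeriv volume) Set.univ := by
            rw [withDensity_apply _ MeasurableSet.univ, Measure.restrict_univ]
        _ ≤ μ Set.univ := Measure.le_iff'.1 (Measure.withDensity_rnDeriv_le μ volume) _
        _ = 1 := measure_univ
    have haeq : (fun x => ENNReal.ofReal (g x / I)) =ᵐ[volume.restrict Ω]
        μ.rnDeriv volume :=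
      ae_eq_of_ae_le_of_lintegral_le hlow (by rw [hlint]; exact ENNReal.one_ne_top)
        (μ.measurable_rnDeriv volume).aemeasurable (by rw [hlint]; exact hfint)
    have hΩint : ∫⁻ x in Ω, μ.rnDeriv volume x = 1 := by
      rw [← lintegral_congr_ae haeq]; exact hlint
    have hcompl : ∫⁻ x in Ωᶜ, μ.rnDeriv volume x = 0 := by
      have h4 := lintegral_add_compl (μ := volume) (μ.rnDeriv volume) hΩm
      have h9 : ∫⁻ x, μ.rnDeriv volume x ≤ 1 := by
        calc ∫⁻ x, μ.rnDeriv volume x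
            = volume.withDensity (μ.rnDeriv volume) Set.univ := by
              rw [withDensity_apply _ MeasurableSet.univ, Measure.restrict_univ]
          _ ≤ μ Set.univ := Measure.le_iff'.1 (Measure.withDensity_rnDeriv_le μ volume) _
          _ = 1 := measure_univ
      rw [hΩint] at h4
      have h10 : (1:ℝ≥0∞) + ∫⁻ x in Ωᶜ, μ.rnDeriv volume x ≤ 1 + 0 := by
        rw [add_zero, h4]; exact h9
      exact le_antisymm (ENNReal.le_of_add_le_add_left ENNReal.one_ne_top h10) (zero_le)
    have hzero : μ.rnDeriv volume =ᵐ[volume.restrict Ωᶜ] 0 :=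
      (lintegral_eq_zero_iff' (μ.measurable_rnDeriv volume).aemeasurable).1 hcompl
    have hfd : μ.rnDeriv volume =ᵐ[volume] d := by
      have hOn : ∀ᵐ x ∂volume, x ∈ Ω → ENNReal.ofReal (g x / I) = μ.rnDeriv volume x :=
        (ae_restrict_iff' hΩm).1 haeq
      have hOff : ∀ᵐ x ∂volume, x ∈ Ωᶜ → μ.rnDeriv volume x = 0 :=
        (ae_restrict_iff' hΩm.compl).1 hzero
      filter_upwards [hOn, hOff] with x h1 h2
      rw [hddef]
      by_cases hx : x ∈ Ω
      · rw [Set.indicator_of_mem hx]; exact (h1 hx).symm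
      · rw [Set.indicator_of_notMem hx]; exact h2 hx
    have htotal : ∫⁻ x, μ.rnDeriv volume x = 1 := by
      rw [← lintegral_add_compl (μ := volume) (μ.rnDeriv volume) hΩm, hΩint, hcompl,
        add_zero]
    have hsing : μ.singularPart volume = 0 := by
      have hdec := μ.haveLebesgueDecomposition_add volume
      have h11 : μ Set.univ = μ.singularPart volume Set.univ
          + volume.withDensity (μ.rnDeriv volume) Set.univ := by
        conv_lhs => rw [hdec]
        simp [Measure.add_apply]
      rw [measure_univ, withDensity_apply _ MeasurableSet.univ, Measure.restrict_univ,
        htotal] at h11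
      refine Measure.measure_univ_eq_zero.1 ?_
      have h12 : μ.singularPart volume Set.univ + 1 ≤ 0 + 1 := by
        rw [zero_add, ← h11]
      exact le_antisymm
        (ENNReal.le_of_add_le_add_right ENNReal.one_ne_top h12) (zero_le)
    calc μ = μ.singularPart volume + volume.withDensity (μ.rnDeriv volume) :=
        μ.haveLebesgueDecomposition_add volume
      _ = volume.withDensity (μ.rnDeriv volume) := by rw [hsing, zero_add]
      _ = volume.withDensity d := withDensity_congr_ae hfd
      _ = μinf := hμinf_eq.symm
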